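/- Let s, s' : ℕ → ℝ assign positive sizes to three nodes u, v, w before and after a zig-zig rotation, with ranks r(x) = log₂(s(x)) and r'(x) = log₂(s'(x)). Assume r'(u) = r(w), r'(v) ≤ r'(u), r(v) ≥ r(u), and s(u) + s'(w) ≤ s'(u). Then the total rank change δ = r'(w) + r'(v) + r'(u) − r(w) − r(v) − r(u) satisfies δ ≤ 3(r'(u) − r(u)) − 2. -/
import Mathlib

lemma logb_add_le (a b c : ℝ) (ha : 0 < a) (hb : 0 < b) (hab : a + b ≤ c) :
    Real.logb 2 a + Real.logb 2 b ≤ 2 * Real.logb 2 c - 2 := by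
  have hc : 0 < c := lt_of_lt_of_le (by linarith) hab
  have hab2 : a * b ≤ c ^ 2 / 4 := by nlinarith [sq_nonneg (a - b), sq_nonneg (a + b)]
  have h1 : Real.logb 2 a + Real.logb 2 b = Real.logb 2 (a * b) := by
    rw [Real.logb_mul ha.ne' hb.ne']
  have h2 : Real.logb 2 (a * b) ≤ Real.logb 2 (c ^ 2 / 4) :=
    (Real.logb_le_logb (by norm_num) (by positivity) (by positivity)).mpr hab2
  have h3 : Real.logb 2 (c ^ 2 / 4) = 2 * Real.logb 2 c - 2 := by
    rw [Real.logb_div (by positivity) (by norm_num), Real.logb_pow]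
    have : Real.logb 2 4 = 2 := by
      rw [show (4:ℝ) = 2 ^ (2:ℕ) by norm_num, Real.logb_pow, Real.logb_self_eq_one (by norm_num : (1:ℝ)<2)]
      norm_num
    rw [this]; ring
  linarith

/-- Zig-zig rank change bound: sizes before (`su, sv, sw`) and after (`su', sv', sw'`)
a zig-zig rotation at `u`, with ranks the base-2 logarithms of the sizes. -/
theorem zigzig_rank_change
    (su sv sw su' sv' sw' : ℝ)
    (hsu : 0 < su) (hsv : 0 < sv) (hsw : 0 < sw)
    (hsu' : 0 < su') (hsv' : 0 < sv') (hsw' : 0 < sw')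
    (h1 : Real.logb 2 su' = Real.logb 2 sw)
    (h2 : Real.logb 2 sv' ≤ Real.logb 2 su')
    (h3 : Real.logb 2 sv ≥ Real.logb 2 su)
    (h4 : su + sw' ≤ su') :
    Real.logb 2 sw' + Real.logb 2 sv' + Real.logb 2 su'
      - Real.logb 2 sw - Real.logb 2 sv - Real.logb 2 su
      ≤ 3 * (Real.logb 2 su' - Real.logb 2 su) - 2 := by
  have key := logb_add_le su sw' su' hsu hsw' h4
  linarith
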